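/- For every real α > 1 there exist a number of jobs m, processing times p : Fin m → ℕ (all positive), and preferred schedules σ₁, σ₂ of two agents, such that: every schedule τ that is Pareto-consistent with the profile (σ₁, σ₂) satisfies ∑_{a∈{1,2}} T(τ, σ_a) > α · min over all schedules ρ of ∑_{a∈{1,2}} T(ρ, σ_a). -/

import Mathlib

/-- Completion time of job `i` in schedule `τ` (a bijection from jobs to positions),
with processing times `p`: the total processing time of jobs scheduled no later
than `i`. -/
def completionTime {m : ℕ} (p : Fin m → ℕ) (τ : Equiv.Perm (Fin m)) (i : Fin m) : ℕ :=
  ∑ j ∈ Finset.univ.filter (fun j => τ j ≤ τ i), p j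

/-- Tardiness cost of an agent with preferred schedule `σ` for the schedule `τ`:
`∑ i, max (0, C_i(τ) - C_i(σ))` (via truncated subtraction on ℕ). -/
def tardiness {m : ℕ} (p : Fin m → ℕ) (τ σ : Equiv.Perm (Fin m)) : ℕ :=
  ∑ i : Fin m, (completionTime p τ i - completionTime p σ i)

namespace NPE

def pp (k : ℕ) : Fin (2*k+1) → ℕ := fun j => if j = 0 then 2*k+1 else 1

def revFun (k : ℕ) (i : Fin (2*k+1)) : Fin (2*k+1) :=
  if _ : i.val = 0 then i else ⟨2*k+1 - i.val, by omega⟩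

lemma revFun_val (k : ℕ) (i : Fin (2*k+1)) :
    (revFun k i).val = if i.val = 0 then 0 else 2*k+1 - i.val := by
  unfold revFun
  split_ifs with h
  · exact h
  · rfl

lemma revFun_invol (k : ℕ) : Function.Involutive (revFun k) := by
  intro i
  have hi := i.isLt
  apply Fin.ext
  rw [revFun_val, revFun_val]
  split_ifs <;> omega

def sigma2 (k : ℕ) : Equiv.Perm (Fin (2*k+1)) := (revFun_invol k).toPerm

lemma sigma2_val (k : ℕ) (i : Fin (2*k+1)) :
    (sigma2 k i).val = if i.val = 0 then 0 else 2*k+1 - i.val := revFun_val k i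

lemma card_filter_le {n : ℕ} (τ : Equiv.Perm (Fin n)) (i : Fin n) :
    (Finset.univ.filter (fun j => τ j ≤ τ i)).card = (τ i).val + 1 := by
  have h : Finset.univ.filter (fun j => τ j ≤ τ i)
      = (Finset.Iic (τ i)).map τ.symm.toEmbedding := by
    ext j
    simp [Equiv.symm_apply_eq]
  rw [h, Finset.card_map, Fin.card_Iic]

lemma comp_eq (k : ℕ) (τ : Equiv.Perm (Fin (2*k+1))) (i : Fin (2*k+1)) :
    completionTime (pp k) τ i = (τ i).val + 1 + (if τ 0 ≤ τ i then 2*k else 0) := by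
  unfold completionTime
  have h : ∀ j : Fin (2*k+1), pp k j = 1 + (if j = 0 then 2*k else 0) := by
    intro j; unfold pp; split_ifs <;> omega
  simp only [h]
  rw [Finset.sum_add_distrib, Finset.sum_const, smul_eq_mul, mul_one, card_filter_le,
    Finset.sum_ite_eq' _ (0 : Fin (2*k+1))]
  simp

lemma cost_lb (k : ℕ) (ρ : Equiv.Perm (Fin (2*k+1))) :
    2*(ρ 0).val + ∑ x ∈ Finset.range (2*k+1), (if (ρ 0).val < x then x - k else 0)
      ≤ tardiness (pp k) ρ 1 + tardiness (pp k) ρ (sigma2 k) := by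
  set t := (ρ 0).val with ht
  unfold tardiness
  rw [← Finset.sum_add_distrib]
  have hsum : ∑ x ∈ Finset.range (2*k+1), (if t < x then x - k else 0)
      = ∑ i : Fin (2*k+1), (if t < (ρ i).val then (ρ i).val - k else 0) := by
    rw [Equiv.sum_comp ρ (fun x : Fin (2*k+1) => if t < x.val then x.val - k else 0)]
    rw [Fin.sum_univ_eq_sum_range (fun x : ℕ => if t < x then x - k else 0) (2*k+1)]
  have h2t : (2*t : ℕ) = ∑ i : Fin (2*k+1), (if i = 0 then 2*t else 0) := by
    rw [Finset.sum_ite_eq' _ (0 : Fin (2*k+1))]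
    simp
  rw [hsum, h2t, ← Finset.sum_add_distrib]
  apply Finset.sum_le_sum
  intro i _
  have hx := (ρ i).isLt
  have hi := i.isLt
  rw [comp_eq, comp_eq, comp_eq]
  simp only [Equiv.Perm.one_apply]
  have h1 : (0 : Fin (2*k+1)) ≤ i := Fin.zero_le i
  have h2 : sigma2 k 0 ≤ sigma2 k i := by
    simp [Fin.le_def, sigma2_val]
  simp only [h1, h2, if_true]
  rw [sigma2_val]
  by_cases h0 : i.val = 0
  · have : i = 0 := Fin.ext h0
    subst this
    rw [if_pos (le_refl (ρ 0))]
    simp only [Fin.val_zero]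
    split_ifs <;> omega
  · have hne : (ρ i).val ≠ t := by
      intro hc
      exact h0 (congrArg Fin.val (ρ.injective (Fin.ext hc)))
    have h03 : ¬ (i = 0) := fun hc => h0 (congrArg Fin.val hc)
    simp only [Fin.le_def, Fin.val_zero, if_neg h03, if_neg h0]
    split_ifs <;> omega


def rho (k : ℕ) : Equiv.Perm (Fin (2*k+1)) where
  toFun i := if _ : i.val = 0 then ⟨2*k, by omega⟩ else ⟨i.val - 1, by have := i.isLt; omega⟩
  invFun j := if _ : j.val = 2*k then ⟨0, by omega⟩ else ⟨j.val + 1, by have := j.isLt; omega⟩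
  left_inv i := by
    have hi := i.isLt
    dsimp only
    by_cases h : i.val = 0
    · rw [dif_pos h, dif_pos rfl]
      exact Fin.ext h.symm
    · rw [dif_neg h, dif_neg (by simp; omega)]
      exact Fin.ext (by simp; omega)
  right_inv j := by
    have hj := j.isLt
    dsimp only
    by_cases h : j.val = 2*k
    · rw [dif_pos h, dif_pos rfl]
      exact Fin.ext (by simp; omega)
    · rw [dif_neg h, dif_neg (by simp)]
      exact Fin.ext (by simp)

lemma rho_val (k : ℕ) (i : Fin (2*k+1)) :
    (rho k i).val = if i.val = 0 then 2*k else i.val - 1 := by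
  show ((if _ : i.val = 0 then (⟨2*k, by omega⟩ : Fin (2*k+1)) else ⟨i.val - 1, by have := i.isLt; omega⟩)).val = _
  split_ifs <;> rfl

lemma cost_rho (k : ℕ) :
    tardiness (pp k) (rho k) 1 + tardiness (pp k) (rho k) (sigma2 k) = 4*k := by
  unfold tardiness
  rw [← Finset.sum_add_distrib]
  have key : ∀ i : Fin (2*k+1),
      (completionTime (pp k) (rho k) i - completionTime (pp k) 1 i)
        + (completionTime (pp k) (rho k) i - completionTime (pp k) (sigma2 k) i)
      = if i = 0 then 4*k else 0 := by
    intro i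
    have hi := i.isLt
    rw [comp_eq, comp_eq, comp_eq]
    simp only [Equiv.Perm.one_apply]
    have h2 : sigma2 k 0 ≤ sigma2 k i := by
      simp [Fin.le_def, sigma2_val]
    simp only [Fin.zero_le i, h2, if_true]
    rw [sigma2_val]
    by_cases h0 : i.val = 0
    · have : i = 0 := Fin.ext h0
      subst this
      rw [if_pos (le_refl (rho k 0))]
      simp only [Fin.val_zero, rho_val]
      split_ifs <;> omega
    · have h03 : ¬ (i = 0) := fun hc => h0 (congrArg Fin.val hc)
      have hcond : ¬ (rho k 0 ≤ rho k i) := by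
        rw [Fin.le_def, rho_val, rho_val]
        simp only [Fin.val_zero]
        split_ifs <;> omega
      rw [if_neg hcond, if_neg h03]
      simp only [Fin.val_zero, rho_val]
      split_ifs <;> omega
  rw [Finset.sum_congr rfl (fun i _ => key i), Finset.sum_ite_eq' _ (0 : Fin (2*k+1))]
  simp


end NPE

namespace NPE2

lemma L1 (c : ℕ) : ∀ n, ∑ x ∈ Finset.range (n + c), (x - c) = ∑ x ∈ Finset.range n, x
  | 0 => by
      simp only [Nat.zero_add, Finset.range_zero, Finset.sum_empty]
      apply Finset.sum_eq_zero
      intro x hx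
      rw [Finset.mem_range] at hx
      omega
  | (n+1) => by
      have h : n+1+c = (n+c)+1 := by omega
      rw [h, Finset.sum_range_succ, L1 c n, Finset.sum_range_succ]
      have h2 : n + c - c = n := by omega
      rw [h2]

lemma L2 (k t : ℕ) (hk : 7 ≤ k) (ht : t ≤ 2*k) :
    4*k ≤ 2*t + ∑ x ∈ Finset.range (2*k+1), (if t < x then x - k else 0) := by
  have e1 : (∑ x ∈ Finset.range (t+1), (if t < x then x - k else 0))
      + ∑ x ∈ Finset.Ico (t+1) (2*k+1), (if t < x then x - k else 0)
      = ∑ x ∈ Finset.range (2*k+1), (if t < x then x - k else 0) :=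
    Finset.sum_range_add_sum_Ico _ (show t+1 ≤ 2*k+1 by omega)
  have z1 : ∑ x ∈ Finset.range (t+1), (if t < x then x - k else 0) = 0 :=
    Finset.sum_eq_zero (fun x hx => by
      rw [Finset.mem_range] at hx; rw [if_neg (by omega)])
  have c1 : ∑ x ∈ Finset.Ico (t+1) (2*k+1), (if t < x then x - k else 0)
      = ∑ x ∈ Finset.Ico (t+1) (2*k+1), (x - k) :=
    Finset.sum_congr rfl (fun x hx => by
      rw [Finset.mem_Ico] at hx; rw [if_pos (by omega)])
  have e2 : (∑ x ∈ Finset.range (t+1), (x - k)) + ∑ x ∈ Finset.Ico (t+1) (2*k+1), (x - k)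
      = ∑ x ∈ Finset.range (2*k+1), (x - k) :=
    Finset.sum_range_add_sum_Ico _ (show t+1 ≤ 2*k+1 by omega)
  have eS : ∑ x ∈ Finset.range (2*k+1), (x - k) = ∑ x ∈ Finset.range (k+1), x := by
    have h : 2*k+1 = (k+1)+k := by omega
    rw [h]
    exact L1 k (k+1)
  have gS : (∑ x ∈ Finset.range (k+1), x) * 2 = (k+1)*k := by
    have := Finset.sum_range_id_mul_two (k+1)
    simpa using this
  by_cases hcase : t ≤ k
  · have z2 : ∑ x ∈ Finset.range (t+1), (x - k) = 0 :=
      Finset.sum_eq_zero (fun x hx => by rw [Finset.mem_range] at hx; omega)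
    have h8 : 8*k ≤ (∑ x ∈ Finset.range (k+1), x) * 2 := by
      rw [gS]
      exact Nat.mul_le_mul_right k (by omega)
    omega
  · obtain ⟨s, hs, hs1, hsk⟩ : ∃ s, t = k + s ∧ 1 ≤ s ∧ s ≤ k :=
      ⟨t - k, by omega, by omega, by omega⟩
    have z2 : ∑ x ∈ Finset.range (t+1), (x - k) = ∑ x ∈ Finset.range (s+1), x := by
      have h : t+1 = (s+1)+k := by omega
      rw [h]
      exact L1 k (s+1)
    have gH : (∑ x ∈ Finset.range (s+1), x) * 2 = (s+1)*s := by
      have := Finset.sum_range_id_mul_two (s+1)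
      simpa using this
    have hZ : (4*k:ℤ) ≤ 2*t + (∑ x ∈ Finset.Ico (t+1) (2*k+1), (x - k) : ℕ) := by
      have hHX : ((∑ x ∈ Finset.range (s+1), x : ℕ) : ℤ)
          + (∑ x ∈ Finset.Ico (t+1) (2*k+1), (x - k) : ℕ)
          = ((∑ x ∈ Finset.range (k+1), x : ℕ) : ℤ) := by
        rw [← z2]
        exact_mod_cast congrArg (Nat.cast : ℕ → ℤ) (eS ▸ e2)
      have h2S : ((∑ x ∈ Finset.range (k+1), x : ℕ) : ℤ) * 2 = (k+1)*k := by exact_mod_cast gS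
      have h2H : ((∑ x ∈ Finset.range (s+1), x : ℕ) : ℤ) * 2 = (s+1)*s := by exact_mod_cast gH
      have hts : (t:ℤ) = k + s := by exact_mod_cast hs
      have haux : (0:ℤ) ≤ ((k:ℤ) - s) * ((k:ℤ) + s - 3) := by
        apply mul_nonneg
        · have : (s:ℤ) ≤ k := by exact_mod_cast hsk
          omega
        · have : (7:ℤ) ≤ k := by exact_mod_cast hk
          omega
      nlinarith [hHX, h2S, h2H, hts, haux]
    have : 4*k ≤ 2*t + ∑ x ∈ Finset.Ico (t+1) (2*k+1), (x - k) := by exact_mod_cast hZ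
    omega


end NPE2

/-- For every `α > 1` there is an instance (jobs with positive processing times and
two agents) on which every Pareto-consistent schedule has total tardiness strictly
larger than `α` times the minimum total tardiness: no Pareto-efficient rule is
`α`-approximate for Σ-T. -/
theorem no_pareto_efficient_approx_sum_tardiness (α : ℝ) (hα : 1 < α) :
    ∃ (m : ℕ) (p : Fin m → ℕ) (σ₁ σ₂ : Equiv.Perm (Fin m)),
      (∀ i, 0 < p i) ∧
      ∃ ρmin : Equiv.Perm (Fin m),
        (∀ ρ : Equiv.Perm (Fin m),
          tardiness p ρmin σ₁ + tardiness p ρmin σ₂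
            ≤ tardiness p ρ σ₁ + tardiness p ρ σ₂) ∧
        ∀ τ : Equiv.Perm (Fin m),
          (∀ k ℓ : Fin m, σ₁ k < σ₁ ℓ → σ₂ k < σ₂ ℓ → τ k < τ ℓ) →
          α * ((tardiness p ρmin σ₁ + tardiness p ρmin σ₂ : ℕ) : ℝ)
            < ((tardiness p τ σ₁ + tardiness p τ σ₂ : ℕ) : ℝ) := by
  classical
  set k : ℕ := ⌈8*α⌉₊ + 7 with hkdef
  have hk7 : 7 ≤ k := by omega
  have hkα : 8*α ≤ (k:ℝ) := by
    have h1 := Nat.le_ceil (8*α)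
    have h2 : ((⌈8*α⌉₊ : ℕ) : ℝ) ≤ k := by
      have : (⌈8*α⌉₊ : ℕ) ≤ k := by omega
      exact_mod_cast this
    linarith
  refine ⟨2*k+1, NPE.pp k, 1, NPE.sigma2 k, ?_, NPE.rho k, ?_, ?_⟩
  · intro i
    unfold NPE.pp
    split_ifs <;> omega
  · intro ρ
    rw [NPE.cost_rho]
    have h1 := NPE.cost_lb k ρ
    have h2 := NPE2.L2 k (ρ 0).val hk7 (by have := (ρ 0).isLt; omega)
    omega
  · intro τ hτ
    have h0 : τ 0 = 0 := by
      have hle : ∀ i, τ 0 ≤ τ i := by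
        intro i
        rcases eq_or_ne i 0 with rfl | h
        · exact le_refl _
        · refine le_of_lt (hτ 0 i ?_ ?_)
          · simp only [Equiv.Perm.one_apply]
            exact Fin.pos_of_ne_zero h
          · rw [Fin.lt_def, NPE.sigma2_val, NPE.sigma2_val]
            have h' : i.val ≠ 0 := fun hc => h (Fin.ext hc)
            have := i.isLt
            simp only [Fin.val_zero]
            split_ifs <;> omega
      have h1 : τ 0 ≤ τ (τ.symm 0) := hle (τ.symm 0)
      rw [Equiv.apply_symm_apply] at h1
      exact le_antisymm h1 (Fin.zero_le _)
    have hlb := NPE.cost_lb k τ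
    rw [h0] at hlb
    simp only [Fin.val_zero] at hlb
    have hS : ∑ x ∈ Finset.range (2*k+1), (if 0 < x then x - k else 0)
        = ∑ x ∈ Finset.range (k+1), x := by
      have e1 : ∑ x ∈ Finset.range (2*k+1), (if 0 < x then x - k else 0)
          = ∑ x ∈ Finset.range (2*k+1), (x - k) :=
        Finset.sum_congr rfl (fun x _ => by
          rcases Nat.eq_zero_or_pos x with rfl | hx
          · simp
          · rw [if_pos hx])
      rw [e1, show 2*k+1 = (k+1)+k by omega]
      exact NPE2.L1 k (k+1)
    erw [hS] at hlb
    rw [NPE.cost_rho]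
    set S : ℕ := ∑ x ∈ Finset.range (k+1), x with hSdef
    have hgauss : (S:ℝ) * 2 = (k+1)*k := by
      have : S * 2 = (k+1)*k := by
        have := Finset.sum_range_id_mul_two (k+1)
        simpa using this
      exact_mod_cast this
    have hcost : (S:ℝ) ≤ ((tardiness (NPE.pp k) τ 1 + tardiness (NPE.pp k) τ (NPE.sigma2 k) : ℕ) : ℝ) := by
      have : S ≤ tardiness (NPE.pp k) τ 1 + tardiness (NPE.pp k) τ (NPE.sigma2 k) := by omega
      exact_mod_cast this
    have hk0 : (0:ℝ) < k := by
      have : 0 < k := by omega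
      exact_mod_cast this
    have hfinal : α * ((4*k : ℕ) : ℝ) < S := by
      have h4k : ((4*k : ℕ) : ℝ) = 4*(k:ℝ) := by push_cast; ring
      rw [h4k]
      nlinarith [mul_le_mul_of_nonneg_right hkα hk0.le, hgauss, hk0]
    calc α * ((4*k : ℕ) : ℝ) < (S:ℝ) := hfinal
      _ ≤ _ := hcost
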